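/- Let λ, δ, β, θ > 0 with θ > λ and λ/δ < (θ-λ)/β. Set r = λ(β+θ-λ)/((θ-λ)(λ+δ)) and define π(0,d) > 0 arbitrary, π(n,d) = π(0,d)·(βλ/((λ+δ)(θ-λ)))·r^{n-1} for n ≥ 1, π(n,b) = π(0,d)·(β/(λ+δ))·r^{n} for n ≥ 0. Then π satisfies the global balance equations of the dam process: π(0,b)(λ+δ) = π(0,d)β; π(0,d)β = π(1,d)(θ-λ) + π(0,b)δ; for n ≥ 1: π(n,b)(λ+δ) = π(n-1,b)λ + π(n,d)β and π(n,d)(θ-λ+β) = π(n+1,d)(θ-λ) + π(n,b)δ. -/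

import Mathlib

theorem stmt_5 (lam del bet th : ℝ)
    (hlam : 0 < lam) (hdel : 0 < del) (hbet : 0 < bet) (hth : 0 < th)
    (hthlam : lam < th)
    (hstab : lam / del < (th - lam) / bet)
    (r : ℝ) (hr : r = lam * (bet + th - lam) / ((th - lam) * (lam + del)))
    (pib pid : ℕ → ℝ) (hpid0 : 0 < pid 0)
    (hpid : ∀ n, 1 ≤ n →
      pid n = pid 0 * (bet * lam / ((lam + del) * (th - lam))) * r ^ (n - 1))
    (hpib : ∀ n, pib n = pid 0 * (bet / (lam + del)) * r ^ n) :
    (pib 0 * (lam + del) = pid 0 * bet) ∧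
    (pid 0 * bet = pid 1 * (th - lam) + pib 0 * del) ∧
    (∀ n, 1 ≤ n →
      pib n * (lam + del) = pib (n - 1) * lam + pid n * bet ∧
      pid n * (th - lam + bet) = pid (n + 1) * (th - lam) + pib n * del) := by
  have ht : (0:ℝ) < th - lam := by linarith
  have ha : (0:ℝ) < lam + del := by linarith
  have ht' := ht.ne'
  have ha' := ha.ne'
  refine ⟨?_, ?_, ?_⟩
  · rw [hpib 0]; field_simp
  · rw [hpid 1 le_rfl, hpib 0]
    field_simp
    ring
  · intro n hn
    obtain ⟨m, rfl⟩ := Nat.exists_eq_add_of_le hn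
    simp only [Nat.add_sub_cancel_left] at *
    constructor
    · rw [hpib (1 + m), hpib m, hpid (1 + m) (by omega), hr]
      simp only [Nat.add_sub_cancel_left, Nat.add_sub_cancel, add_comm 1 m, pow_succ]
      field_simp
      ring
    · rw [hpid (1 + m) (by omega), hpid (1 + m + 1) (by omega), hpib (1 + m), hr]
      simp only [Nat.add_sub_cancel_left, Nat.add_sub_cancel, show 1 + m + 1 - 1 = m + 1 by omega,
        show 1 + m = m + 1 by omega, pow_succ]
      field_simp
      ring
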